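/- For any sequence of C(n,2) distinct unordered pairs from {1,...,n} (an RCMSN), the total number of deliveries is at least 2*C(n,2) + 2*C(n,3); equivalently, the capacity is at least 2(n+1)/(3n). -/
import Mathlib


/-- Packet `a k` can reach sensor `x`: there is an increasing chain of packets
starting at `a k`, consecutive packets intersecting, ending at a packet containing `x`. -/
def canReach {n m : ℕ} (a : Fin m → Finset (Fin n)) (k : Fin m) (x : Fin n) : Prop :=
  ∃ k' : Fin m,
    Relation.ReflTransGen (fun i j : Fin m => i < j ∧ (a i ∩ a j).Nonempty) k k' ∧ x ∈ a k'

/-- Since `a` is injective into the 2-subsets and the cardinalities match,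
every 2-subset is hit. -/
lemma rcmsn_surj {n m : ℕ} (hm : m = n.choose 2) (a : Fin m → Finset (Fin n))
    (hinj : Function.Injective a) (hcard : ∀ k, (a k).card = 2) :
    ∀ t : Finset (Fin n), t.card = 2 → ∃ k, a k = t := by
  classical
  let f : Fin m → {t : Finset (Fin n) // t ∈ Finset.powersetCard 2 Finset.univ} :=
    fun k => ⟨a k, by simp [Finset.mem_powersetCard, hcard k]⟩
  have hf : Function.Injective f := fun i j h => hinj (congrArg Subtype.val h)
  have hcardeq : Fintype.card {t : Finset (Fin n) // t ∈ Finset.powersetCard 2 Finset.univ}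
      = m := by
    rw [Fintype.card_coe, Finset.card_powersetCard, Finset.card_univ, Fintype.card_fin, hm]
  have hbij : Function.Bijective f :=
    (Fintype.bijective_iff_injective_and_card f).2 ⟨hf, by rw [Fintype.card_fin]; convert hcardeq.symm⟩
  intro t ht
  obtain ⟨k, hk⟩ := hbij.2 ⟨t, by simp [Finset.mem_powersetCard, ht]⟩
  exact ⟨k, congrArg Subtype.val hk⟩

/-- For any sequence of `C(n,2)` distinct unordered pairs from `{1,...,n}` (an RCMSN),
the total number of deliveries is at least `2*C(n,2) + 2*C(n,3)`. -/
theorem stmt_1 (n m : ℕ) (hm : m = n.choose 2) (a : Fin m → Finset (Fin n))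
    (hinj : Function.Injective a) (hcard : ∀ k, (a k).card = 2) :
    2 * n.choose 2 + 2 * n.choose 3 ≤
      {p : Fin m × Fin n | canReach a p.1 p.2}.ncard := by
  classical
  have hsurj := rcmsn_surj hm a hinj hcard
  set T := {p : Fin m × Fin n | canReach a p.1 p.2} with hT
  set A : Finset (Fin m × Fin n) := Finset.univ.filter (fun p => p.2 ∈ a p.1) with hA
  set B : Finset (Fin m × Fin n) := Finset.univ.filter
    (fun p => p.2 ∉ a p.1 ∧ ∃ j, p.1 < j ∧ p.2 ∈ a j ∧ (a p.1 ∩ a j).Nonempty) with hB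
  have hmemA : ∀ p : Fin m × Fin n, p ∈ A ↔ p.2 ∈ a p.1 := by
    intro p; simp [hA]
  have hmemB : ∀ p : Fin m × Fin n, p ∈ B ↔
      p.2 ∉ a p.1 ∧ ∃ j, p.1 < j ∧ p.2 ∈ a j ∧ (a p.1 ∩ a j).Nonempty := by
    intro p; simp [hB]
  have hdisj : Disjoint A B := by
    rw [Finset.disjoint_left]
    intro p hp hq
    exact ((hmemB p).1 hq).1 ((hmemA p).1 hp)
  -- A ∪ B ⊆ T
  have hsub : ↑(A ∪ B) ⊆ T := by
    intro p hp
    rcases Finset.mem_union.1 hp with h | h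
    · exact ⟨p.1, Relation.ReflTransGen.refl, (hmemA p).1 h⟩
    · obtain ⟨-, j, hj, hxj, hint⟩ := (hmemB p).1 h
      exact ⟨j, Relation.ReflTransGen.single ⟨hj, hint⟩, hxj⟩
  -- |A| = 2 * C(n,2)
  have hAcard : A.card = 2 * n.choose 2 := by
    rw [Finset.card_eq_sum_card_fiberwise
      (f := Prod.fst) (t := Finset.univ) (fun p _ => Finset.mem_univ _)]
    have hfib : ∀ k : Fin m, (A.filter fun p => p.1 = k).card = 2 := by
      intro k
      rw [← hcard k]
      apply Finset.card_bij (fun p _ => p.2)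
      · intro p hp
        simp only [Finset.mem_filter] at hp
        rw [← hp.2]
        exact (hmemA p).1 hp.1
      · intro p hp q hq h
        simp only [Finset.mem_filter] at hp hq
        exact Prod.ext (hp.2.trans hq.2.symm) h
      · intro x hx
        exact ⟨(k, x), Finset.mem_filter.2 ⟨(hmemA (k, x)).2 hx, rfl⟩, rfl⟩
    simp only [hfib, Finset.sum_const, Finset.card_univ, Fintype.card_fin, smul_eq_mul]
    rw [hm, Nat.mul_comm]
  -- |B| = 2 * C(n,3)
  have hBcard : B.card = 2 * n.choose 3 := by
    have hmap : ∀ p ∈ B, insert p.2 (a p.1) ∈ Finset.powersetCard 3 (Finset.univ : Finset (Fin n)) := by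
      intro p hp
      obtain ⟨hnot, -⟩ := (hmemB p).1 hp
      rw [Finset.mem_powersetCard]
      refine ⟨Finset.subset_univ _, ?_⟩
      rw [Finset.card_insert_of_notMem hnot, hcard]
    rw [Finset.card_eq_sum_card_fiberwise hmap]
    have hfib : ∀ s ∈ Finset.powersetCard 3 (Finset.univ : Finset (Fin n)),
        (B.filter fun p => insert p.2 (a p.1) = s).card = 2 := by
      intro s hs
      rw [Finset.mem_powersetCard] at hs
      have hs3 : s.card = 3 := hs.2
      -- K: the set of indices whose packet is inside s
      set K : Finset (Fin m) := Finset.univ.filter (fun k => a k ⊆ s) with hK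
      have hmemK : ∀ k, k ∈ K ↔ a k ⊆ s := by intro k; simp [hK]
      have hKcard : K.card = 3 := by
        have : K.card = (Finset.powersetCard 2 s).card := by
          apply Finset.card_bij (fun k _ => a k)
          · intro k hk
            rw [Finset.mem_powersetCard]
            exact ⟨(hmemK k).1 hk, hcard k⟩
          · intro i _ j _ h; exact hinj h
          · intro t ht
            rw [Finset.mem_powersetCard] at ht
            obtain ⟨k, hk⟩ := hsurj t ht.2
            exact ⟨k, (hmemK k).2 (hk ▸ ht.1), hk⟩
        rw [this, Finset.card_powersetCard, hs3]
        rfl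
      have hKne : K.Nonempty := Finset.card_pos.1 (by omega)
      set M := K.max' hKne with hM
      have hMK : M ∈ K := K.max'_mem hKne
      -- the fiber is in bijection with K.erase M
      have hfe : (B.filter fun p => insert p.2 (a p.1) = s).card = (K.erase M).card := by
        apply Finset.card_bij (fun p _ => p.1)
        · intro p hp
          simp only [Finset.mem_filter] at hp
          obtain ⟨hpB, hps⟩ := hp
          obtain ⟨hnot, j, hj, hxj, z, hz⟩ := (hmemB p).1 hpB
          rw [Finset.mem_inter] at hz
          have hsubp : a p.1 ⊆ s := hps ▸ (Finset.subset_insert _ _)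
          have hjK : j ∈ K := by
            rw [hmemK]
            have hne : p.2 ≠ z := fun h => hnot (h ▸ hz.1)
            have hpair : ({p.2, z} : Finset (Fin n)) = a j := by
              apply Finset.eq_of_subset_of_card_le
              · intro w hw
                rcases Finset.mem_insert.1 hw with h | h
                · exact h ▸ hxj
                · rw [Finset.mem_singleton] at h; exact h ▸ hz.2
              · rw [hcard, Finset.card_insert_of_notMem (by simp [hne]),
                  Finset.card_singleton]
            intro y hy
            rw [← hpair] at hy
            rcases Finset.mem_insert.1 hy with h | h
            · exact h ▸ (hps ▸ Finset.mem_insert_self p.2 (a p.1))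
            · rw [Finset.mem_singleton] at h
              exact h ▸ hsubp hz.1
          have hpK : p.1 ∈ K := (hmemK _).2 hsubp
          refine Finset.mem_erase.2 ⟨?_, hpK⟩
          intro h
          have := K.le_max' j hjK
          rw [← hM] at this
          omega
        · intro p hp q hq h
          simp only [Finset.mem_filter] at hp hq
          obtain ⟨hpB, hps⟩ := hp
          obtain ⟨hqB, hqs⟩ := hq
          have h1 : p.2 ∈ s \ a p.1 := by
            rw [Finset.mem_sdiff]
            exact ⟨hps ▸ Finset.mem_insert_self _ _, ((hmemB p).1 hpB).1⟩
          have h2 : q.2 ∈ s \ a p.1 := by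
            rw [Finset.mem_sdiff, h]
            exact ⟨hqs ▸ Finset.mem_insert_self _ _, ((hmemB q).1 hqB).1⟩
          have hcard1 : (s \ a p.1).card = 1 := by
            rw [Finset.card_sdiff_of_subset (by
              have := hps ▸ (Finset.subset_insert p.2 (a p.1)); exact this), hs3, hcard]
          rw [Finset.card_eq_one] at hcard1
          obtain ⟨w, hw⟩ := hcard1
          rw [hw, Finset.mem_singleton] at h1 h2
          exact Prod.ext h (h1.trans h2.symm)
        · intro k hk
          obtain ⟨hkM, hkK⟩ := Finset.mem_erase.1 hk
          have hks : a k ⊆ s := (hmemK k).1 hkK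
          have hcard1 : (s \ a k).card = 1 := by
            rw [Finset.card_sdiff_of_subset hks, hs3, hcard]
          obtain ⟨x, hx⟩ := Finset.card_eq_one.1 hcard1
          have hxk : x ∈ s \ a k := hx ▸ Finset.mem_singleton_self x
          rw [Finset.mem_sdiff] at hxk
          have hkM' : k < M := lt_of_le_of_ne (K.le_max' k hkK) hkM
          have hMs : a M ⊆ s := (hmemK M).1 hMK
          have hMne : a M ≠ a k := fun h => hkM (hinj h).symm
          have hxM : x ∈ a M := by
            by_contra hxM
            apply hMne
            apply Finset.eq_of_subset_of_card_le
            · intro y hy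
              have hys : y ∈ s := hMs hy
              by_contra hyk
              have : y ∈ s \ a k := Finset.mem_sdiff.2 ⟨hys, hyk⟩
              rw [hx, Finset.mem_singleton] at this
              exact hxM (this ▸ hy)
            · rw [hcard, hcard]
          have hint : (a k ∩ a M).Nonempty := by
            rw [← Finset.card_pos]
            have hu : (a k ∪ a M).card ≤ 3 := hs3 ▸ Finset.card_le_card
              (Finset.union_subset hks hMs)
            have := Finset.card_inter_add_card_union (a k) (a M)
            rw [hcard, hcard] at this
            omega
          refine ⟨(k, x), ?_, rfl⟩
          simp only [Finset.mem_filter]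
          constructor
          · exact (hmemB (k, x)).2 ⟨hxk.2, M, hkM', hxM, hint⟩
          · apply Finset.eq_of_subset_of_card_le
            · exact Finset.insert_subset hxk.1 hks
            · rw [hs3, Finset.card_insert_of_notMem hxk.2, hcard]
      rw [hfe, Finset.card_erase_of_mem hMK, hKcard]
    rw [Finset.sum_congr rfl hfib, Finset.sum_const, smul_eq_mul,
      Finset.card_powersetCard, Finset.card_univ, Fintype.card_fin, Nat.mul_comm]
  -- conclude
  calc 2 * n.choose 2 + 2 * n.choose 3 = (A ∪ B).card := by
        rw [Finset.card_union_of_disjoint hdisj, hAcard, hBcard]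
    _ = (↑(A ∪ B) : Set (Fin m × Fin n)).ncard := (Set.ncard_coe_finset _).symm
    _ ≤ T.ncard := Set.ncard_le_ncard hsub (Set.toFinite T)
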